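/- Let F be a real n×n matrix with F + Fᵀ ⪰ 0 and Π diagonal with entries in {0,1}. With γ₁ = γ₂ = 1/2, define H = (F − I)(I − Π/2)(F − I)ᵀ + F + Fᵀ and Ĥ = (F + I)(I − Π/2)(F + I)ᵀ. Then every eigenvalue λ of the pencil H y = λ Ĥ y satisfies 1/2 ≤ λ ≤ 3. -/

import Mathlib

open Matrix

private lemma quad_aux {n : ℕ} (d : Fin n → ℝ) (A : Matrix (Fin n) (Fin n) ℝ)
    (y : Fin n → ℝ) :
    y ⬝ᵥ (A * (1 - (1/2:ℝ) • diagonal d) * Aᵀ) *ᵥ y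
      = ∑ i, (1 - d i * (1/2)) * ((Aᵀ *ᵥ y) i)^2 := by
  have h : (A * (1 - (1/2:ℝ) • diagonal d) * Aᵀ) *ᵥ y
      = A *ᵥ ((1 - (1/2:ℝ) • diagonal d) *ᵥ (Aᵀ *ᵥ y)) := by
    rw [Matrix.mulVec_mulVec, Matrix.mulVec_mulVec]
  rw [h, Matrix.dotProduct_mulVec, ← Matrix.mulVec_transpose]
  generalize (Aᵀ *ᵥ y) = u
  simp [Matrix.sub_mulVec, Matrix.one_mulVec, Matrix.smul_mulVec, dotProduct,
    Matrix.mulVec_diagonal, mul_sub]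
  rw [← Finset.sum_sub_distrib]
  apply Finset.sum_congr rfl
  intro i _
  ring

theorem stmt10 {n : ℕ} (F : Matrix (Fin n) (Fin n) ℝ) (d : Fin n → ℝ)
    (hF : (F + Fᵀ).PosSemidef) (hd : ∀ i, d i = 0 ∨ d i = 1) :
    ∀ (lam : ℝ) (y : Fin n → ℝ), y ≠ 0 →
      ((F - 1) * (1 - (1 / 2 : ℝ) • diagonal d) * (F - 1)ᵀ + F + Fᵀ).mulVec y
        = lam • ((F + 1) * (1 - (1 / 2 : ℝ) • diagonal d) * (F + 1)ᵀ).mulVec y →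
      1 / 2 ≤ lam ∧ lam ≤ 3 := by
  intro lam y hy heq
  set g : Fin n → ℝ := Fᵀ *ᵥ y with hg
  clear_value g
  have hv : ∀ i, (((F - 1)ᵀ) *ᵥ y) i = g i - y i := by
    intro i
    simp [Matrix.transpose_sub, Matrix.sub_mulVec, hg]
  have hw : ∀ i, (((F + 1)ᵀ) *ᵥ y) i = g i + y i := by
    intro i
    simp [Matrix.transpose_add, Matrix.add_mulVec, hg]
  -- the three scalar quantities
  set SH : ℝ := ∑ i, (1 - d i * (1/2)) * (g i - y i)^2 with hSH
  set SB : ℝ := ∑ i, (1 - d i * (1/2)) * (g i + y i)^2 with hSB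
  set T : ℝ := ∑ i, g i * y i with hT
  clear_value SH SB T
  have hqF : y ⬝ᵥ F *ᵥ y = T := by
    rw [Matrix.dotProduct_mulVec, ← Matrix.mulVec_transpose]
    simp [dotProduct, hT, hg]
  have hqFt : y ⬝ᵥ Fᵀ *ᵥ y = T := by
    simp only [dotProduct, hT, hg]
    exact Finset.sum_congr rfl (fun i _ => mul_comm _ _)
  have hqA : y ⬝ᵥ ((F - 1) * (1 - (1/2:ℝ) • diagonal d) * (F - 1)ᵀ) *ᵥ y = SH := by
    rw [quad_aux, hSH]
    exact Finset.sum_congr rfl (fun i _ => by rw [hv i])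
  have hqB : y ⬝ᵥ ((F + 1) * (1 - (1/2:ℝ) • diagonal d) * (F + 1)ᵀ) *ᵥ y = SB := by
    rw [quad_aux, hSB]
    exact Finset.sum_congr rfl (fun i _ => by rw [hw i])
  -- dot the eigen-equation with y
  have heq2 : SH + 2 * T = lam * SB := by
    have h := congrArg (fun z => y ⬝ᵥ z) heq
    simp only [Matrix.add_mulVec, dotProduct_add, dotProduct_smul, smul_eq_mul] at h
    rw [hqA, hqF, hqFt, hqB] at h
    linarith
  -- positivity of the F + Fᵀ form
  have hTnn : 0 ≤ T := by
    have h := hF.dotProduct_mulVec_nonneg y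
    simp only [RCLike.star_def, star_trivial] at h
    rw [Matrix.add_mulVec, dotProduct_add, hqF, hqFt] at h
    simpa using h
  -- SB is positive
  have hy' : ∃ i, y i ≠ 0 := Function.ne_iff.mp hy
  have hwne : ∃ i, g i + y i ≠ 0 := by
    by_contra h
    push_neg at h
    have hgy : ∀ i, g i = -y i := fun i => by have := h i; linarith
    have hT' : T = -∑ i, y i * y i := by
      rw [hT, ← Finset.sum_neg_distrib]
      exact Finset.sum_congr rfl (fun i _ => by rw [hgy i]; ring)
    obtain ⟨i0, hi0⟩ := hy'
    have h1 : y i0 * y i0 ≤ ∑ i, y i * y i :=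
      Finset.single_le_sum (fun i _ => mul_self_nonneg (y i)) (Finset.mem_univ i0)
    have h2 : 0 < y i0 * y i0 := mul_self_pos.mpr hi0
    linarith
  have hSBpos : 0 < SB := by
    obtain ⟨i0, hi0⟩ := hwne
    have hterm : ∀ i ∈ Finset.univ, (0:ℝ) ≤ (1 - d i * (1/2)) * (g i + y i)^2 := by
      intro i _
      rcases hd i with h | h <;> rw [h] <;> positivity
    have h1 : (1 - d i0 * (1/2)) * (g i0 + y i0)^2 ≤ SB := by
      rw [hSB]
      exact Finset.single_le_sum hterm (Finset.mem_univ i0)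
    have h2 : 0 < (1 - d i0 * (1/2)) * (g i0 + y i0)^2 := by
      have := sq_pos_of_ne_zero hi0
      rcases hd i0 with h | h <;> rw [h] <;> nlinarith
    linarith
  -- lower bound: 0 ≤ 2*SH - SB + 4*T
  have hlow : 0 ≤ 2 * SH - SB + 4 * T := by
    have h : 0 ≤ ∑ i, (2 * ((1 - d i * (1/2)) * (g i - y i)^2)
        - (1 - d i * (1/2)) * (g i + y i)^2 + 4 * (g i * y i)) := by
      apply Finset.sum_nonneg
      intro i _
      rcases hd i with h | h <;> rw [h] <;>
        nlinarith [sq_nonneg (g i - y i), sq_nonneg (g i + y i)]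
    rw [Finset.sum_add_distrib, Finset.sum_sub_distrib, ← Finset.mul_sum,
      ← Finset.mul_sum] at h
    rw [hSH, hSB, hT]
    linarith
  -- upper bound: 0 ≤ 3*SB - SH - 4*T
  have hup : 0 ≤ 3 * SB - SH - 4 * T := by
    have h : 0 ≤ ∑ i, (3 * ((1 - d i * (1/2)) * (g i + y i)^2)
        - (1 - d i * (1/2)) * (g i - y i)^2 - 4 * (g i * y i)) := by
      apply Finset.sum_nonneg
      intro i _
      rcases hd i with h | h <;> rw [h] <;>
        nlinarith [sq_nonneg (g i + y i), sq_nonneg (g i), sq_nonneg (y i)]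
    rw [Finset.sum_sub_distrib, Finset.sum_sub_distrib, ← Finset.mul_sum,
      ← Finset.mul_sum] at h
    rw [hSH, hSB, hT]
    linarith
  constructor
  · nlinarith [heq2, hlow, hSBpos]
  · nlinarith [heq2, hup, hSBpos, hTnn]
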